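/- Let q ≥ 4 be a power of a prime p and fix T > 0. Define μ_q(n) = ∏_{d | n} G_q(d), where G_q(d) = (1 − q^{−e_q(d)})^{φ(d)/e_q(d)} if gcd(d, p) = 1 and G_q(d) = 1 otherwise. Then there exists a constant C > 0 such that for all real x ≥ C, the number of positive integers n ≤ x with μ_q(n) < 1 − 1/q − 1/√q − T is at most x/(1 + T√q). -/

import Mathlib

open Filter Finset

/-! Auxiliary development: the multiplicative function `F N = ∑_{d ∣ N} φ(d)/d`
and the bound `F N ≤ √(N+1)`. -/

noncomputable def gfun (d : ℕ) : ℝ := (d.totient : ℝ) / d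

lemma gfun_nonneg (d : ℕ) : 0 ≤ gfun d := by
  unfold gfun; positivity

lemma gfun_le_one (d : ℕ) : gfun d ≤ 1 := by
  unfold gfun
  rcases Nat.eq_zero_or_pos d with h | h
  · simp [h]
  · rw [div_le_one (by exact_mod_cast h)]
    exact_mod_cast Nat.totient_le d

lemma gfun_one : gfun 1 = 1 := by simp [gfun]

lemma gfun_mul {a b : ℕ} (h : a.Coprime b) : gfun (a * b) = gfun a * gfun b := by
  rcases Nat.eq_zero_or_pos a with ha | ha
  · subst ha
    have : b = 1 := by simpa [Nat.coprime_zero_left] using h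
    simp [this, gfun]
  rcases Nat.eq_zero_or_pos b with hb | hb
  · subst hb
    have : a = 1 := by simpa [Nat.coprime_zero_right] using h
    simp [this, gfun]
  unfold gfun
  rw [Nat.totient_mul h]
  push_cast
  rw [div_mul_div_comm]

noncomputable def Ffun (N : ℕ) : ℝ := ∑ d ∈ N.divisors, gfun d

noncomputable def garith : ArithmeticFunction ℝ := ⟨gfun, by simp [gfun]⟩

lemma garith_isMult : garith.IsMultiplicative :=
  ⟨by simpa [garith] using gfun_one, fun h => by simpa [garith] using gfun_mul h⟩

lemma Ffun_eq (N : ℕ) : Ffun N = ((ArithmeticFunction.zeta : ArithmeticFunction ℕ) * garith) N := by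
  rw [ArithmeticFunction.coe_zeta_mul_apply]
  rfl

lemma Ffun_isMult : ∀ {a b : ℕ}, a.Coprime b → Ffun (a * b) = Ffun a * Ffun b := by
  intro a b h
  rw [Ffun_eq, Ffun_eq, Ffun_eq]
  exact (ArithmeticFunction.isMultiplicative_zeta.natCast.mul garith_isMult).2 h

lemma Ffun_nonneg (N : ℕ) : 0 ≤ Ffun N :=
  Finset.sum_nonneg fun d _ => gfun_nonneg d

lemma gfun_prime_pow {ℓ : ℕ} (hp : ℓ.Prime) (i : ℕ) :
    gfun (ℓ ^ (i + 1)) = 1 - 1 / (ℓ : ℝ) := by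
  unfold gfun
  rw [Nat.totient_prime_pow hp (Nat.succ_pos i)]
  have hℓ0 : (0 : ℝ) < (ℓ : ℝ) := by exact_mod_cast hp.pos
  have h1 : (1 : ℕ) ≤ ℓ := hp.one_lt.le
  push_cast [Nat.cast_sub h1]
  rw [pow_succ]
  field_simp

lemma Ffun_prime_pow {ℓ : ℕ} (hp : ℓ.Prime) (a : ℕ) :
    Ffun (ℓ ^ a) = 1 + a * (1 - 1 / (ℓ : ℝ)) := by
  unfold Ffun
  rw [Nat.sum_divisors_prime_pow hp, Finset.sum_range_succ']
  simp only [pow_zero, gfun_one]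
  rw [Finset.sum_congr rfl (fun i _ => gfun_prime_pow hp i)]
  rw [Finset.sum_const, nsmul_eq_mul]
  simp [Finset.card_range]; ring

-- factorization product forms
lemma Ffun_one : Ffun 1 = 1 := by
  simp [Ffun, gfun]

lemma Ffun_factorization {N : ℕ} (hN : N ≠ 0) :
    Ffun N = ∏ ℓ ∈ N.primeFactors, Ffun (ℓ ^ N.factorization ℓ) := by
  rw [Nat.multiplicative_factorization Ffun (fun x y h => Ffun_isMult h) Ffun_one hN]
  rw [Finsupp.prod]
  rfl

lemma sqrt_factorization {N : ℕ} (hN : N ≠ 0) :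
    Real.sqrt N = ∏ ℓ ∈ N.primeFactors, (Real.sqrt ℓ) ^ N.factorization ℓ := by
  have hNcast : (N : ℝ) = ∏ ℓ ∈ N.primeFactors, (ℓ : ℝ) ^ N.factorization ℓ := by
    conv_lhs => rw [← Nat.factorization_prod_pow_eq_self hN]
    rw [Finsupp.prod]
    push_cast
    rfl
  have hsq : (∏ ℓ ∈ N.primeFactors, (Real.sqrt ℓ) ^ N.factorization ℓ) ^ 2
      = (N : ℝ) := by
    rw [hNcast, ← Finset.prod_pow]
    apply Finset.prod_congr rfl
    intro ℓ _
    rw [← pow_mul, mul_comm (N.factorization ℓ) 2, pow_mul, Real.sq_sqrt (by positivity)]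
  rw [← hsq, Real.sqrt_sq (Finset.prod_nonneg fun ℓ _ => pow_nonneg (Real.sqrt_nonneg _) _)]

-- squared per-prime inequalities
lemma step_sq {L y : ℝ} (hL : 3 ≤ L) (hy : 2 - 1/L ≤ y) :
    (y + (1 - 1/L)) ^ 2 ≤ L * y ^ 2 := by
  have h0 : 0 < L := by linarith
  have h1 : 0 < 1/L := by positivity
  have h2 : 1/L ≤ 1/3 := by
    rw [div_le_div_iff₀ h0 (by norm_num)]; linarith
  nlinarith [sq_nonneg (y - 1), sq_nonneg y]

lemma sq1 {L : ℝ} (hL : 3 ≤ L) : ∀ a : ℕ, 1 ≤ a → (1 + a * (1 - 1/L)) ^ 2 ≤ L ^ a := by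
  intro a ha
  induction a with
  | zero => omega
  | succ n ih =>
    rcases Nat.eq_or_lt_of_le ha with h | h
    · -- n + 1 = 1
      have hn : n = 0 := by omega
      subst hn
      have h0 : 0 < L := by linarith
      have h2 : 1/L ≤ 1/3 := by rw [div_le_div_iff₀ h0 (by norm_num)]; linarith
      have h3 : 0 < 1/L := by positivity
      push_cast
      rw [pow_one]
      have hrw : (1 + 1 * (1 - 1/L)) = (2*L - 1)/L := by field_simp; ring
      rw [hrw, div_pow, div_le_iff₀ (by positivity)]
      have key : 0 ≤ (L - 3) * (L^2 - L + 1) := by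
        apply mul_nonneg (by linarith)
        nlinarith [sq_nonneg (L - 1)]
      nlinarith [key]
    · have hn : 1 ≤ n := by omega
      have IH := ih hn
      have hstep : (1 + (n:ℝ) * (1 - 1/L) + (1 - 1/L)) ^ 2 ≤ L * (1 + n * (1 - 1/L)) ^ 2 := by
        apply step_sq hL
        have h0 : 0 < L := by linarith
        have h2 : 1/L ≤ 1/3 := by rw [div_le_div_iff₀ h0 (by norm_num)]; linarith
        have : (1:ℝ) ≤ (n:ℝ) := by exact_mod_cast hn
        nlinarith
      have hpos : (0:ℝ) ≤ L := by linarith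
      calc (1 + ((n:ℕ)+1 : ℕ) * (1 - 1/L)) ^ 2
          = (1 + (n:ℝ) * (1 - 1/L) + (1 - 1/L)) ^ 2 := by push_cast; ring
        _ ≤ L * (1 + n * (1 - 1/L)) ^ 2 := hstep
        _ ≤ L * L ^ n := by nlinarith
        _ = L ^ (n+1) := by ring

lemma sq2 {L : ℝ} (hL : 5 ≤ L) : ∀ a : ℕ, 1 ≤ a →
    (1 + a * (1 - 1/L)) ^ 2 ≤ (8/9) * L ^ a := by
  intro a ha
  induction a with
  | zero => omega
  | succ n ih =>
    have h0 : 0 < L := by linarith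
    have h2 : 1/L ≤ 1/5 := by rw [div_le_div_iff₀ h0 (by norm_num)]; linarith
    have h3 : 0 < 1/L := by positivity
    rcases Nat.eq_or_lt_of_le ha with h | h
    · have hn : n = 0 := by omega
      subst hn
      push_cast
      rw [pow_one]
      nlinarith
    · have hn : 1 ≤ n := by omega
      have IH := ih hn
      have hstep : (1 + (n:ℝ) * (1 - 1/L) + (1 - 1/L)) ^ 2 ≤ L * (1 + n * (1 - 1/L)) ^ 2 := by
        apply step_sq (by linarith)
        have : (1:ℝ) ≤ (n:ℝ) := by exact_mod_cast hn
        nlinarith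
      calc (1 + ((n:ℕ)+1 : ℕ) * (1 - 1/L)) ^ 2
          = (1 + (n:ℝ) * (1 - 1/L) + (1 - 1/L)) ^ 2 := by push_cast; ring
        _ ≤ L * (1 + n * (1 - 1/L)) ^ 2 := hstep
        _ ≤ L * ((8/9) * L ^ n) := by nlinarith
        _ = (8/9) * L ^ (n+1) := by ring

lemma sq2' : ∀ a : ℕ, 2 ≤ a → (1 + a * (1 - 1/(3:ℝ))) ^ 2 ≤ (8/9) * (3:ℝ) ^ a := by
  intro a ha
  induction a with
  | zero => omega
  | succ n ih =>
    rcases Nat.eq_or_lt_of_le ha with h | h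
    · have hn : n = 1 := by omega
      subst hn; norm_num
    · have hn : 2 ≤ n := by omega
      have IH := ih hn
      have hstep : (1 + (n:ℝ) * (1 - 1/3) + (1 - 1/3)) ^ 2 ≤ 3 * (1 + n * (1 - 1/3)) ^ 2 := by
        apply step_sq le_rfl
        have : (2:ℝ) ≤ (n:ℝ) := by exact_mod_cast hn
        nlinarith
      calc ((1:ℝ) + ((n:ℕ)+1 : ℕ) * (1 - 1/(3:ℝ))) ^ 2
          = (1 + (n:ℝ) * (1 - 1/3) + (1 - 1/3)) ^ 2 := by push_cast; ring
        _ ≤ 3 * (1 + (n:ℝ) * (1 - 1/3)) ^ 2 := hstep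
        _ ≤ 3 * ((8/9) * (3:ℝ) ^ n) := by nlinarith
        _ = (8/9) * (3:ℝ) ^ (n+1) := by ring

lemma sq3 : ∀ a : ℕ, 2 ≤ a → (1 + a * (1 - 1/(2:ℝ))) ^ 2 ≤ (2:ℝ) ^ a := by
  intro a ha
  induction a with
  | zero => omega
  | succ n ih =>
    rcases Nat.eq_or_lt_of_le ha with h | h
    · have hn : n = 1 := by omega
      subst hn; norm_num
    · have hn : 2 ≤ n := by omega
      have IH := ih hn
      have hcast : (2:ℝ) ≤ (n:ℝ) := by exact_mod_cast hn
      have hy : (2:ℝ) ≤ 1 + n * (1 - 1/2) := by nlinarith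
      calc ((1:ℝ) + ((n:ℕ)+1 : ℕ) * (1 - 1/(2:ℝ))) ^ 2
          = (1 + (n:ℝ) * (1 - 1/2) + 1/2) ^ 2 := by push_cast; ring
        _ ≤ 2 * (1 + (n:ℝ) * (1 - 1/2)) ^ 2 := by nlinarith
        _ ≤ 2 * (2:ℝ) ^ n := by nlinarith
        _ = (2:ℝ) ^ (n+1) := by ring

lemma factor_nonneg {ℓ : ℕ} (hp : ℓ.Prime) (a : ℕ) :
    (0:ℝ) ≤ 1 + a * (1 - 1 / (ℓ : ℝ)) := by
  have h2 : (2:ℝ) ≤ ℓ := by exact_mod_cast hp.two_le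
  have : 1 / (ℓ:ℝ) ≤ 1 := by
    rw [div_le_one (by linarith)]; linarith
  have : (0:ℝ) ≤ 1 - 1/ℓ := by linarith
  positivity

/-- From the squared inequality to the sqrt form. -/
lemma le_c_mul_sqrt_pow {ℓ a : ℕ} {x c : ℝ} (hx : 0 ≤ x) (hc : 0 ≤ c)
    (h : x ^ 2 ≤ c ^ 2 * (ℓ:ℝ) ^ a) : x ≤ c * Real.sqrt ℓ ^ a := by
  have hR : (0:ℝ) ≤ c * Real.sqrt ℓ ^ a := by positivity
  have hsq : (c * Real.sqrt ℓ ^ a) ^ 2 = c ^ 2 * (ℓ:ℝ) ^ a := by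
    rw [mul_pow, ← pow_mul, mul_comm a 2, pow_mul, Real.sq_sqrt (by positivity)]
  have := h.trans_eq hsq.symm
  exact (pow_le_pow_iff_left₀ hx hR (two_ne_zero)).mp this

lemma factor_le_sqrt {ℓ : ℕ} (hp : ℓ.Prime) (hodd : ℓ ≠ 2) {a : ℕ} (ha : 1 ≤ a) :
    1 + a * (1 - 1 / (ℓ : ℝ)) ≤ Real.sqrt ℓ ^ a := by
  have hL : (3:ℝ) ≤ ℓ := by
    have := hp.two_le
    have h3 : 3 ≤ ℓ := by
      rcases Nat.lt_or_ge ℓ 3 with h | h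
      · interval_cases ℓ <;> simp_all
      · exact h
    exact_mod_cast h3
  have := sq1 hL a ha
  have h := le_c_mul_sqrt_pow (factor_nonneg hp a) (zero_le_one) (by simpa using this)
  simpa using h

lemma factor_le_kappa_sqrt {ℓ : ℕ} (hp : ℓ.Prime) (hodd : ℓ ≠ 2) {a : ℕ} (ha : 1 ≤ a)
    (hne : ¬(ℓ = 3 ∧ a = 1)) :
    1 + a * (1 - 1 / (ℓ : ℝ)) ≤ (Real.sqrt 8 / 3) * Real.sqrt ℓ ^ a := by
  have hc : (0:ℝ) ≤ Real.sqrt 8 / 3 := by positivity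
  have hc2 : (Real.sqrt 8 / 3) ^ 2 = 8/9 := by
    rw [div_pow, Real.sq_sqrt (by norm_num)]; norm_num
  apply le_c_mul_sqrt_pow (factor_nonneg hp a) hc
  rw [hc2]
  by_cases h3 : ℓ = 3
  · subst h3
    have ha2 : 2 ≤ a := by
      rcases Nat.eq_or_lt_of_le ha with h | h
      · exact absurd ⟨rfl, h.symm⟩ hne
      · omega
    exact_mod_cast sq2' a ha2
  · have hL : (5:ℝ) ≤ ℓ := by
      have h5 : 5 ≤ ℓ := by
        have h2 := hp.two_le
        have h4 : ℓ ≠ 4 := by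
          rintro rfl
          norm_num at hp
        omega
      exact_mod_cast h5
    exact sq2 hL a ha

lemma factor2_le {a : ℕ} (ha : 2 ≤ a) :
    1 + a * (1 - 1 / (2 : ℝ)) ≤ Real.sqrt 2 ^ a := by
  have h := le_c_mul_sqrt_pow (ℓ := 2) (factor_nonneg Nat.prime_two a) zero_le_one
    (by simpa using sq3 a ha)
  simpa using h

lemma Ffun_odd_le {N : ℕ} (hN : N ≠ 0) (hodd : ¬ 2 ∣ N) : Ffun N ≤ Real.sqrt N := by
  rw [Ffun_factorization hN, sqrt_factorization hN]
  apply Finset.prod_le_prod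
  · intro ℓ hℓ
    rw [Ffun_prime_pow (Nat.prime_of_mem_primeFactors hℓ)]
    exact factor_nonneg (Nat.prime_of_mem_primeFactors hℓ) _
  · intro ℓ hℓ
    have hp := Nat.prime_of_mem_primeFactors hℓ
    have hne2 : ℓ ≠ 2 := by
      rintro rfl
      exact hodd (Nat.dvd_of_mem_primeFactors hℓ)
    have ha : 1 ≤ N.factorization ℓ := by
      rw [Nat.one_le_iff_ne_zero, ← Finsupp.mem_support_iff]
      simpa using hℓ
    rw [Ffun_prime_pow hp]
    exact factor_le_sqrt hp hne2 ha

lemma Ffun_odd_le_kappa {N : ℕ} (hN : N ≠ 0) (hodd : ¬ 2 ∣ N) (h1 : N ≠ 1) (h3 : N ≠ 3) :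
    Ffun N ≤ (Real.sqrt 8 / 3) * Real.sqrt N := by
  have hNe : N.primeFactors.Nonempty := Nat.nonempty_primeFactors.mpr (by omega)
  by_cases hex : ∃ ℓ ∈ N.primeFactors, ¬(ℓ = 3 ∧ N.factorization ℓ = 1)
  · obtain ⟨ℓ₀, hℓ₀, hℓ₀ne⟩ := hex
    have hp₀ := Nat.prime_of_mem_primeFactors hℓ₀
    have hne2 : ∀ ℓ ∈ N.primeFactors, ℓ ≠ 2 := by
      intro ℓ hℓ
      rintro rfl
      exact hodd (Nat.dvd_of_mem_primeFactors hℓ)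
    have ha : ∀ ℓ ∈ N.primeFactors, 1 ≤ N.factorization ℓ := by
      intro ℓ hℓ
      rw [Nat.one_le_iff_ne_zero, ← Finsupp.mem_support_iff]
      simpa using hℓ
    rw [Ffun_factorization hN, sqrt_factorization hN]
    rw [← Finset.mul_prod_erase _ _ hℓ₀, ← Finset.mul_prod_erase _ _ hℓ₀, ← mul_assoc]
    apply mul_le_mul
    · rw [Ffun_prime_pow hp₀]
      exact factor_le_kappa_sqrt hp₀ (hne2 _ hℓ₀) (ha _ hℓ₀) hℓ₀ne
    · apply Finset.prod_le_prod
      · intro ℓ hℓ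
        have hp := Nat.prime_of_mem_primeFactors (Finset.mem_of_mem_erase hℓ)
        rw [Ffun_prime_pow hp]
        exact factor_nonneg hp _
      · intro ℓ hℓ
        have hℓ' := Finset.mem_of_mem_erase hℓ
        have hp := Nat.prime_of_mem_primeFactors hℓ'
        rw [Ffun_prime_pow hp]
        exact factor_le_sqrt hp (hne2 _ hℓ') (ha _ hℓ')
    · apply Finset.prod_nonneg
      intro ℓ hℓ
      have hp := Nat.prime_of_mem_primeFactors (Finset.mem_of_mem_erase hℓ)
      rw [Ffun_prime_pow hp]
      exact factor_nonneg hp _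
    · positivity
  · push_neg at hex
    exfalso
    obtain ⟨ℓ₀, hℓ₀⟩ := hNe
    obtain ⟨h3', ha1⟩ := hex ℓ₀ hℓ₀
    subst h3'
    have hsupp : N.primeFactors = {3} := by
      apply Finset.eq_singleton_iff_unique_mem.mpr
      exact ⟨hℓ₀, fun ℓ hℓ => (hex ℓ hℓ).1⟩
    have : N = 3 := by
      conv_lhs => rw [← Nat.factorization_prod_pow_eq_self hN]
      rw [Finsupp.prod]
      have : (N.factorization).support = N.primeFactors := by simp
      rw [this, hsupp, Finset.prod_singleton, ha1, pow_one]
    exact h3 this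

lemma sqrt_pow_nat {x : ℝ} (hx : 0 ≤ x) (a : ℕ) : Real.sqrt x ^ a = Real.sqrt (x ^ a) := by
  have : (Real.sqrt x ^ a) ^ 2 = x ^ a := by
    rw [← pow_mul, mul_comm a 2, pow_mul, Real.sq_sqrt hx]
  rw [← this, Real.sqrt_sq (by positivity)]

theorem Ffun_le_sqrt_succ {N : ℕ} (hN : N ≠ 0) : Ffun N ≤ Real.sqrt ((N : ℝ) + 1) := by
  have hmono : Real.sqrt N ≤ Real.sqrt ((N:ℝ) + 1) := Real.sqrt_le_sqrt (by linarith)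
  obtain ⟨a, M, hNeq, hModd⟩ : ∃ a M, 2 ^ a * M = N ∧ ¬ 2 ∣ M :=
    ⟨_, _, Nat.ordProj_mul_ordCompl_eq_self N 2, Nat.not_dvd_ordCompl Nat.prime_two hN⟩
  have hM0 : M ≠ 0 := by
    rintro rfl
    simp at hNeq
    exact hN hNeq.symm
  have hcop : Nat.Coprime (2 ^ a) M :=
    Nat.Coprime.pow_left _ ((Nat.Prime.coprime_iff_not_dvd Nat.prime_two).mpr hModd)
  have hsplit : Ffun N = Ffun (2 ^ a) * Ffun M := by
    rw [← hNeq]; exact Ffun_isMult hcop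
  have hMcast : (0:ℝ) ≤ (M:ℝ) := by positivity
  have hNcast : (N:ℝ) = 2 ^ a * (M:ℝ) := by exact_mod_cast hNeq.symm
  match a, hsplit, hNcast with
  | 0, hsplit, hNcast =>
    have hNM : N = M := by omega
    subst hNM
    rw [hsplit, pow_zero, Ffun_one, one_mul]
    exact (Ffun_odd_le hN hModd).trans hmono
  | 1, hsplit, hNcast =>
    have hN2M : N = 2 * M := by omega
    have hF2 : Ffun (2 ^ 1) = 3 / 2 := by
      rw [Ffun_prime_pow Nat.prime_two]; norm_num
    by_cases hM1 : M = 1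
    · -- N = 2
      subst hM1
      have hN2 : N = 2 := by omega
      subst hN2
      rw [hsplit, hF2, Ffun_one, mul_one]
      rw [show ((2:ℕ):ℝ) + 1 = 3 by norm_num]
      rw [Real.le_sqrt (by norm_num) (by norm_num)]
      norm_num
    · by_cases hM3 : M = 3
      · -- N = 6
        subst hM3
        have hN6 : N = 6 := by omega
        subst hN6
        have hF3 : Ffun 3 = 5 / 3 := by
          have h := Ffun_prime_pow Nat.prime_three 1
          rw [pow_one] at h
          rw [h]; norm_num
        rw [hsplit, hF2, hF3]
        rw [show ((6:ℕ):ℝ) + 1 = 7 by norm_num]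
        rw [Real.le_sqrt (by norm_num) (by norm_num)]
        norm_num
      · have hkey : Ffun M ≤ (Real.sqrt 8 / 3) * Real.sqrt M :=
          Ffun_odd_le_kappa hM0 hModd hM1 hM3
        have hb : Ffun N ≤ (3/2) * ((Real.sqrt 8 / 3) * Real.sqrt M) := by
          rw [hsplit, hF2]
          exact mul_le_mul_of_nonneg_left hkey (by norm_num)
        refine hb.trans (le_trans ?_ hmono)
        have h8 : Real.sqrt 8 = 2 * Real.sqrt 2 := by
          rw [show (8:ℝ) = 2^2 * 2 by norm_num, Real.sqrt_mul (by positivity),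
            Real.sqrt_sq (by norm_num)]
        rw [h8]
        have hNval : Real.sqrt N = Real.sqrt 2 * Real.sqrt M := by
          rw [hNcast, pow_one, Real.sqrt_mul (by norm_num)]
        rw [hNval]
        have h1 := Real.sqrt_nonneg (M:ℝ)
        have h2 := Real.sqrt_nonneg (2:ℝ)
        nlinarith
  | (n+2), hsplit, hNcast =>
    have h2a : 2 ≤ n + 2 := by omega
    have hF2a : Ffun (2 ^ (n+2)) ≤ Real.sqrt 2 ^ (n+2) := by
      rw [Ffun_prime_pow Nat.prime_two]
      exact_mod_cast factor2_le h2a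
    have hFM : Ffun M ≤ Real.sqrt M := Ffun_odd_le hM0 hModd
    have hb : Ffun N ≤ Real.sqrt 2 ^ (n+2) * Real.sqrt M := by
      rw [hsplit]
      exact mul_le_mul hF2a hFM (Ffun_nonneg M) (by positivity)
    refine hb.trans (le_trans ?_ hmono)
    rw [hNcast, Real.sqrt_mul (by positivity), ← sqrt_pow_nat (by norm_num)]

lemma prod_one_sub_le {s : Finset ℕ} (f w : ℕ → ℝ)
    (hf0 : ∀ i ∈ s, 0 ≤ f i) (hf1 : ∀ i ∈ s, f i ≤ 1)
    (hw0 : ∀ i ∈ s, 0 ≤ w i) (hfw : ∀ i ∈ s, 1 - w i ≤ f i) :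
    1 - ∑ i ∈ s, w i ≤ ∏ i ∈ s, f i := by
  induction s using Finset.cons_induction with
  | empty => simp
  | cons a s ha ih =>
    rw [Finset.prod_cons, Finset.sum_cons]
    have hmem : ∀ i ∈ s, i ∈ Finset.cons a s ha := fun i hi => Finset.mem_cons_of_mem hi
    have hP0 : 0 ≤ ∏ i ∈ s, f i := Finset.prod_nonneg fun i hi => hf0 i (hmem i hi)
    have hP1 : ∏ i ∈ s, f i ≤ 1 :=
      Finset.prod_le_one (fun i hi => hf0 i (hmem i hi)) (fun i hi => hf1 i (hmem i hi))
    have hS0 : 0 ≤ ∑ i ∈ s, w i := Finset.sum_nonneg fun i hi => hw0 i (hmem i hi)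
    have hIH : 1 - ∑ i ∈ s, w i ≤ ∏ i ∈ s, f i :=
      ih (fun i hi => hf0 i (hmem i hi)) (fun i hi => hf1 i (hmem i hi))
        (fun i hi => hw0 i (hmem i hi)) (fun i hi => hfw i (hmem i hi))
    have hsa : a ∈ Finset.cons a s ha := Finset.mem_cons_self a s
    have h1 := hf0 a hsa
    have h2 := hf1 a hsa
    have h3 := hw0 a hsa
    have h4 := hfw a hsa
    nlinarith [mul_nonneg (sub_nonneg.mpr h4) hP0, mul_nonneg h3 (sub_nonneg.mpr hP1)]

lemma geom_tail_le {u : ℝ} (hu0 : 0 < u) (hu1 : u < 1) (X : ℕ) :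
    ∑ e ∈ Finset.Icc 3 X, u ^ e ≤ u ^ 3 * (1 / (1 - u)) := by
  rw [← Finset.Ico_add_one_right_eq_Icc, Finset.sum_Ico_eq_sum_range]
  have h3 : ∀ j, u ^ (3 + j) = u ^ 3 * u ^ j := fun j => pow_add u 3 j
  rw [Finset.sum_congr rfl fun j _ => h3 j, ← Finset.mul_sum]
  apply mul_le_mul_of_nonneg_left _ (by positivity)
  set n := X + 1 - 3
  have hgs := geom_sum_mul u n
  have hS0 : (0:ℝ) ≤ u ^ n := by positivity
  rw [le_div_iff₀ (by linarith : (0:ℝ) < 1 - u)]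
  nlinarith [hgs]

set_option maxHeartbeats 3000000 in
theorem density_normal_numerical
    (p m q : ℕ) (hp : p.Prime) (hm : 0 < m) (hq : q = p ^ m) (hq4 : 4 ≤ q)
    (T : ℝ) (hT : 0 < T)
    (G : ℕ → ℝ)
    (hG : ∀ d : ℕ, G d = if Nat.gcd d p = 1 then
      (1 - ((q : ℝ) ^ orderOf (q : ZMod d))⁻¹) ^ (d.totient / orderOf (q : ZMod d))
      else 1)
    (μ : ℕ → ℝ) (hμ : ∀ n : ℕ, μ n = ∏ d ∈ n.divisors, G d) :
    ∃ C : ℝ, 0 < C ∧ ∀ x : ℝ, C ≤ x →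
      (Set.ncard {n : ℕ | 1 ≤ n ∧ (n : ℝ) ≤ x ∧
          μ n < 1 - 1 / (q : ℝ) - 1 / Real.sqrt q - T} : ℝ)
        ≤ x / (1 + T * Real.sqrt q) := by
  -- ### basic real facts
  have hq0 : 0 < q := by omega
  have hqR : (4:ℝ) ≤ (q:ℝ) := by exact_mod_cast hq4
  have hqR0 : (0:ℝ) < (q:ℝ) := by linarith
  set s : ℝ := Real.sqrt q with hs_def
  have hs2 : (2:ℝ) ≤ s := by
    rw [hs_def, show (2:ℝ) = Real.sqrt 4 by
      rw [show (4:ℝ) = 2^2 by norm_num, Real.sqrt_sq (by norm_num)]]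
    exact Real.sqrt_le_sqrt hqR
  have hs0 : (0:ℝ) < s := by linarith
  have hssq : s ^ 2 = (q:ℝ) := Real.sq_sqrt (le_of_lt hqR0)
  set u : ℝ := s⁻¹ with hu_def
  have hu0 : (0:ℝ) < u := by positivity
  have hu2 : u ≤ 1/2 := by
    rw [hu_def, inv_le_comm₀ (by linarith) (by norm_num)]
    simpa using hs2
  have hu1 : u < 1 := by linarith
  have huq : u ^ 2 = ((q:ℝ))⁻¹ := by rw [hu_def, inv_pow, hssq]
  have huq' : (1:ℝ)/(q:ℝ) = u^2 := by rw [huq, one_div]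
  have hus : u * s = 1 := inv_mul_cancel₀ (ne_of_gt hs0)
  -- ### number-theoretic facts about orders
  have hqd : ∀ d : ℕ, Nat.gcd d p = 1 → Nat.Coprime q d := by
    intro d hd
    have h1 : Nat.Coprime d p := hd
    have h2 : Nat.Coprime d (p ^ m) := Nat.Coprime.pow_right m h1
    rw [← hq] at h2
    exact h2.symm
  have horder_pos : ∀ d : ℕ, 1 ≤ d → Nat.gcd d p = 1 → 0 < orderOf ((q:ℕ) : ZMod d) := by
    intro d hd1 hd
    haveI : NeZero d := ⟨by omega⟩
    have hunit : IsUnit ((q:ℕ) : ZMod d) := (ZMod.isUnit_iff_coprime q d).mpr (hqd d hd)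
    obtain ⟨v, hv⟩ := hunit
    have hvpow : v ^ d.totient = 1 := ZMod.pow_totient v
    have hpow : ((q:ℕ) : ZMod d) ^ d.totient = 1 := by
      rw [← hv]
      exact_mod_cast congrArg (Units.coeHom (ZMod d)) hvpow
    exact (isOfFinOrder_iff_pow_eq_one.mpr
      ⟨d.totient, Nat.totient_pos.mpr (by omega), hpow⟩).orderOf_pos
  have horder_le : ∀ d : ℕ, 1 ≤ d → Nat.gcd d p = 1 → orderOf ((q:ℕ) : ZMod d) ≤ d := by
    intro d hd1 hd
    haveI : NeZero d := ⟨by omega⟩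
    have hunit : IsUnit ((q:ℕ) : ZMod d) := (ZMod.isUnit_iff_coprime q d).mpr (hqd d hd)
    obtain ⟨v, hv⟩ := hunit
    have hvpow : v ^ d.totient = 1 := ZMod.pow_totient v
    have hpow : ((q:ℕ) : ZMod d) ^ d.totient = 1 := by
      rw [← hv]
      exact_mod_cast congrArg (Units.coeHom (ZMod d)) hvpow
    have hdvd : orderOf ((q:ℕ) : ZMod d) ∣ d.totient := orderOf_dvd_of_pow_eq_one hpow
    exact le_trans (Nat.le_of_dvd (Nat.totient_pos.mpr (by omega)) hdvd) (Nat.totient_le d)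
  have horder_dvd : ∀ d : ℕ, 1 ≤ d →
      d ∣ q ^ (orderOf ((q:ℕ) : ZMod d)) - 1 := by
    intro d hd1
    haveI : NeZero d := ⟨by omega⟩
    have h1 : ((q:ℕ) : ZMod d) ^ (orderOf ((q:ℕ) : ZMod d)) = 1 := pow_orderOf_eq_one _
    have hq1 : 1 ≤ q ^ (orderOf ((q:ℕ) : ZMod d)) := Nat.one_le_pow _ _ hq0
    have h2 : ((q ^ (orderOf ((q:ℕ) : ZMod d)) - 1 : ℕ) : ZMod d) = 0 := by
      push_cast [Nat.cast_sub hq1]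
      rw [h1]; ring
    exact (ZMod.natCast_eq_zero_iff _ _).mp h2
  have horder_one : orderOf ((q:ℕ) : ZMod 1) = 1 := by
    have h1 : ((q:ℕ) : ZMod 1) = 1 := Subsingleton.elim _ _
    rw [h1, orderOf_one]
  -- ### the weight function w
  set w : ℕ → ℝ := fun d => if Nat.gcd d p = 1 then
      ((d.totient / orderOf ((q:ℕ) : ZMod d) : ℕ) : ℝ) *
        (((q : ℝ)) ^ orderOf ((q:ℕ) : ZMod d))⁻¹
    else 0 with hw_def
  have hw0 : ∀ d, 0 ≤ w d := by
    intro d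
    rw [hw_def]
    dsimp only
    split
    · positivity
    · exact le_rfl
  have hG01 : ∀ d : ℕ, 0 ≤ G d ∧ G d ≤ 1 := by
    intro d
    rw [hG d]
    split
    · have hqe1 : (1:ℝ) ≤ (q:ℝ) ^ orderOf ((q:ℕ) : ZMod d) :=
        one_le_pow₀ (by linarith : (1:ℝ) ≤ (q:ℝ))
      have ht0 : (0:ℝ) < ((q:ℝ) ^ orderOf ((q:ℕ) : ZMod d))⁻¹ := by positivity
      have ht1 : ((q:ℝ) ^ orderOf ((q:ℕ) : ZMod d))⁻¹ ≤ 1 := inv_le_one_of_one_le₀ hqe1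
      constructor
      · apply pow_nonneg; linarith
      · apply pow_le_one₀ (by linarith) (by linarith)
    · exact ⟨zero_le_one, le_refl 1⟩
  have hG_ge : ∀ d : ℕ, 1 - w d ≤ G d := by
    intro d
    rw [hG d, hw_def]
    dsimp only
    split
    · set e := orderOf ((q:ℕ) : ZMod d)
      set k := d.totient / e
      set t := ((q:ℝ) ^ e)⁻¹
      have hqe1 : (1:ℝ) ≤ (q:ℝ) ^ e := one_le_pow₀ (by linarith : (1:ℝ) ≤ (q:ℝ))
      have ht0 : (0:ℝ) ≤ t := by positivity
      have ht1 : t ≤ 1 := inv_le_one_of_one_le₀ hqe1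
      have := one_add_mul_le_pow (show (-2:ℝ) ≤ -t by linarith) k
      calc 1 - (k:ℝ) * t = 1 + (k:ℝ) * (-t) := by ring
        _ ≤ (1 + (-t)) ^ k := this
        _ = (1 - t) ^ k := by ring_nf
    · simp
  -- ### bounds on μ
  have hμ_up : ∀ n : ℕ, 1 ≤ n → μ n ≤ 1 - u ^ 2 := by
    intro n hn
    have h1mem : 1 ∈ n.divisors := Nat.one_mem_divisors.mpr (by omega)
    have hG1 : G 1 = 1 - (q:ℝ)⁻¹ := by
      rw [hG 1, if_pos (Nat.gcd_one_left p), horder_one]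
      norm_num [Nat.totient_one]
    rw [hμ n, ← Finset.mul_prod_erase _ _ h1mem, hG1]
    have hprod0 : 0 ≤ ∏ d ∈ n.divisors.erase 1, G d :=
      Finset.prod_nonneg fun d _ => (hG01 d).1
    have hprod1 : ∏ d ∈ n.divisors.erase 1, G d ≤ 1 :=
      Finset.prod_le_one (fun d _ => (hG01 d).1) (fun d _ => (hG01 d).2)
    have hq1R : (1:ℝ) ≤ (q:ℝ) := by linarith
    have h1q : (0:ℝ) ≤ 1 - (q:ℝ)⁻¹ := by
      have : (q:ℝ)⁻¹ ≤ 1 := inv_le_one_of_one_le₀ hq1R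
      linarith
    calc (1 - (q:ℝ)⁻¹) * ∏ d ∈ n.divisors.erase 1, G d
        ≤ (1 - (q:ℝ)⁻¹) * 1 := mul_le_mul_of_nonneg_left hprod1 h1q
      _ = 1 - u ^ 2 := by rw [huq]; ring
  have hμ_low : ∀ n : ℕ, 1 - ∑ d ∈ n.divisors, w d ≤ μ n := by
    intro n
    rw [hμ n]
    exact prod_one_sub_le G w (fun d _ => (hG01 d).1) (fun d _ => (hG01 d).2)
      (fun d _ => hw0 d) (fun d _ => hG_ge d)
  -- ### value of w at 1
  have hw1 : w 1 = u ^ 2 := by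
    rw [hw_def]
    dsimp only
    rw [if_pos (Nat.gcd_one_left p), horder_one]
    simp [Nat.totient_one, huq]
  -- ### the per-fiber bound
  have hfiber : ∀ e : ℕ, 1 ≤ e → ∀ X : ℕ,
      ∑ d ∈ ((Finset.Ioc 1 X).filter (fun d => Nat.gcd d p = 1)).filter
          (fun d => orderOf ((q:ℕ) : ZMod d) = e), w d / d
        ≤ (u ^ e - u ^ (2*e)) / e := by
    intro e he X
    have hqe1 : 1 ≤ q ^ e := Nat.one_le_pow _ _ hq0
    have hqe4 : 4 ≤ q ^ e := le_trans hq4 (Nat.le_self_pow (by omega) q)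
    have hN0 : q ^ e - 1 ≠ 0 := by omega
    have hse : (0:ℝ) < s ^ e := by positivity
    have hqeR : ((q:ℝ)) ^ e = (s ^ e) ^ 2 := by rw [← hssq]; ring
    have heR : (0:ℝ) < (e:ℝ) := by exact_mod_cast he
    have hqeR0 : (0:ℝ) < (q:ℝ) ^ e := by positivity
    -- termwise bound
    have hterm : ∀ d ∈ ((Finset.Ioc 1 X).filter (fun d => Nat.gcd d p = 1)).filter
        (fun d => orderOf ((q:ℕ) : ZMod d) = e),
        w d / d ≤ (1/((e:ℝ) * (q:ℝ)^e)) * gfun d := by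
      intro d hd
      rw [Finset.mem_filter] at hd
      obtain ⟨hd1, hord⟩ := hd
      rw [Finset.mem_filter, Finset.mem_Ioc] at hd1
      obtain ⟨⟨hd2, hdX⟩, hcop⟩ := hd1
      have hdR : (0:ℝ) < (d:ℝ) := by exact_mod_cast (by omega : 0 < d)
      rw [hw_def]
      dsimp only
      rw [if_pos hcop, hord]
      have hcast : ((d.totient / e : ℕ) : ℝ) ≤ (d.totient : ℝ)/(e:ℝ) := Nat.cast_div_le
      have hstep : ((d.totient / e : ℕ) : ℝ) * ((q:ℝ)^e)⁻¹ / d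
          ≤ ((d.totient : ℝ)/(e:ℝ)) * ((q:ℝ)^e)⁻¹ / d := by
        gcongr
      refine hstep.trans (le_of_eq ?_)
      unfold gfun
      first
      | (field_simp; ring)
      | field_simp
    refine le_trans (Finset.sum_le_sum hterm) ?_
    rw [← Finset.mul_sum]
    have hsub : ((Finset.Ioc 1 X).filter (fun d => Nat.gcd d p = 1)).filter
        (fun d => orderOf ((q:ℕ) : ZMod d) = e) ⊆ (q ^ e - 1).divisors.erase 1 := by
      intro d hd
      rw [Finset.mem_filter] at hd
      obtain ⟨hd1, hord⟩ := hd
      rw [Finset.mem_filter, Finset.mem_Ioc] at hd1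
      obtain ⟨⟨hd2, hdX⟩, hcop⟩ := hd1
      rw [Finset.mem_erase, Nat.mem_divisors]
      refine ⟨by omega, ?_, hN0⟩
      have := horder_dvd d (by omega)
      rwa [hord] at this
    have hsum2 : ∑ d ∈ ((Finset.Ioc 1 X).filter (fun d => Nat.gcd d p = 1)).filter
        (fun d => orderOf ((q:ℕ) : ZMod d) = e), gfun d
        ≤ ∑ d ∈ (q ^ e - 1).divisors.erase 1, gfun d :=
      Finset.sum_le_sum_of_subset_of_nonneg hsub (fun d _ _ => gfun_nonneg d)
    have h1mem : 1 ∈ (q ^ e - 1).divisors := Nat.one_mem_divisors.mpr hN0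
    have herase : ∑ d ∈ (q ^ e - 1).divisors.erase 1, gfun d = Ffun (q ^ e - 1) - 1 := by
      have h := Finset.sum_erase_add (q ^ e - 1).divisors gfun h1mem
      rw [gfun_one] at h
      have : Ffun (q ^ e - 1) = ∑ d ∈ (q ^ e - 1).divisors, gfun d := rfl
      linarith [h]
    have hFle : Ffun (q ^ e - 1) ≤ s ^ e := by
      have h := Ffun_le_sqrt_succ hN0
      have hcast : (((q ^ e - 1 : ℕ)) : ℝ) + 1 = (q:ℝ) ^ e := by
        push_cast [Nat.cast_sub hqe1]
        ring
      rw [hcast, hqeR, Real.sqrt_sq hse.le] at h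
      exact h
    have hbound : ∑ d ∈ ((Finset.Ioc 1 X).filter (fun d => Nat.gcd d p = 1)).filter
        (fun d => orderOf ((q:ℕ) : ZMod d) = e), gfun d ≤ s ^ e - 1 := by
      refine hsum2.trans ?_
      rw [herase]
      linarith
    have hfinal : (1/((e:ℝ) * (q:ℝ)^e)) * (s ^ e - 1) = (u ^ e - u ^ (2*e)) / e := by
      have hue : u ^ e = (s ^ e)⁻¹ := by rw [hu_def, inv_pow]
      have hu2e : u ^ (2*e) = ((s ^ e) ^ 2)⁻¹ := by
        rw [hu_def, inv_pow, ← pow_mul, mul_comm e 2]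
      rw [hqeR, hue, hu2e]
      field_simp
    calc (1/((e:ℝ) * (q:ℝ)^e)) * ∑ d ∈ ((Finset.Ioc 1 X).filter
          (fun d => Nat.gcd d p = 1)).filter
          (fun d => orderOf ((q:ℕ) : ZMod d) = e), gfun d
        ≤ (1/((e:ℝ) * (q:ℝ)^e)) * (s ^ e - 1) := by
          apply mul_le_mul_of_nonneg_left hbound (by positivity)
      _ = (u ^ e - u ^ (2*e)) / e := hfinal
  -- ### the key sum bound
  have hkey : ∀ X : ℕ, 1 ≤ X → ∑ d ∈ Finset.Ioc 0 X, w d / d ≤ u^2 + (u - u^2/6) := by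
    intro X hX1
    have hIoc : Finset.Ioc 0 X = insert 1 (Finset.Ioc 1 X) := by
      ext t
      simp only [Finset.mem_Ioc, Finset.mem_insert]
      omega
    rw [hIoc, Finset.sum_insert (by simp)]
    have h1t : w 1 / (1:ℕ) = u ^ 2 := by rw [hw1]; norm_num
    rw [h1t]
    have hmain : ∑ d ∈ Finset.Ioc 1 X, w d / d ≤ u - u^2/6 := by
      -- restrict to coprime d
      have hres : ∑ d ∈ (Finset.Ioc 1 X).filter (fun d => Nat.gcd d p = 1), w d / d
          = ∑ d ∈ Finset.Ioc 1 X, w d / d := by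
        apply Finset.sum_filter_of_ne
        intro d _ hne
        by_contra hg
        apply hne
        rw [hw_def]
        dsimp only
        rw [if_neg hg]
        simp
      rw [← hres]
      -- fiberwise decomposition
      have hmaps : ∀ d ∈ (Finset.Ioc 1 X).filter (fun d => Nat.gcd d p = 1),
          orderOf ((q:ℕ) : ZMod d) ∈ Finset.Icc 1 X := by
        intro d hd
        rw [Finset.mem_filter, Finset.mem_Ioc] at hd
        obtain ⟨⟨hd2, hdX⟩, hcop⟩ := hd
        rw [Finset.mem_Icc]
        exact ⟨horder_pos d (by omega) hcop, le_trans (horder_le d (by omega) hcop) hdX⟩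
      rw [← Finset.sum_fiberwise_of_maps_to hmaps (fun d => w d / d)]
      -- bound each fiber and sum over e
      have hstep : ∑ e ∈ Finset.Icc 1 X,
          ∑ d ∈ ((Finset.Ioc 1 X).filter (fun d => Nat.gcd d p = 1)).filter
            (fun d => orderOf ((q:ℕ) : ZMod d) = e), w d / d
          ≤ ∑ e ∈ Finset.Icc 1 X, (u ^ e - u ^ (2*e)) / e := by
        apply Finset.sum_le_sum
        intro e he
        rw [Finset.mem_Icc] at he
        exact hfiber e he.1 X
      refine hstep.trans ?_
      -- explicit computation of the geometric-type sum
      have hIcc1 : Finset.Icc 1 X = insert 1 (Finset.Icc 2 X) := by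
        ext t
        simp only [Finset.mem_Icc, Finset.mem_insert]
        omega
      rw [hIcc1, Finset.sum_insert (by simp)]
      have he1 : (u ^ 1 - u ^ (2*1)) / (1:ℕ) = u - u^2 := by norm_num
      rw [he1]
      have htail : ∑ e ∈ Finset.Icc 2 X, (u ^ e - u ^ (2*e)) / e ≤ u^2/2 + u^2/3 := by
        by_cases hX2 : 2 ≤ X
        · have hIcc2 : Finset.Icc 2 X = insert 2 (Finset.Icc 3 X) := by
            ext t
            simp only [Finset.mem_Icc, Finset.mem_insert]
            omega
          rw [hIcc2, Finset.sum_insert (by simp)]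
          have he2 : (u ^ 2 - u ^ (2*2)) / ((2:ℕ):ℝ) ≤ u^2/2 := by
            have h4 : (0:ℝ) ≤ u ^ (2*2) := by positivity
            rw [show ((2:ℕ):ℝ) = 2 by norm_num]
            norm_num
            nlinarith [h4]
          have he3 : ∑ e ∈ Finset.Icc 3 X, (u ^ e - u ^ (2*e)) / e ≤ u^2/3 := by
            have hterm3 : ∀ e ∈ Finset.Icc 3 X, (u ^ e - u ^ (2*e)) / e ≤ u ^ e / 3 := by
              intro e he
              rw [Finset.mem_Icc] at he
              have heR : (3:ℝ) ≤ (e:ℝ) := by exact_mod_cast he.1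
              have h2e : (0:ℝ) ≤ u ^ (2*e) := by positivity
              have hue : (0:ℝ) ≤ u ^ e := by positivity
              have h1 : (u ^ e - u ^ (2*e)) / (e:ℝ) ≤ u ^ e / (e:ℝ) :=
                (div_le_div_iff_of_pos_right (by linarith : (0:ℝ) < (e:ℝ))).mpr (by linarith)
              have h2 : u ^ e / (e:ℝ) ≤ u ^ e / 3 :=
                div_le_div_of_nonneg_left hue (by norm_num) heR
              exact h1.trans h2
            refine (Finset.sum_le_sum hterm3).trans ?_
            have hsum3 : ∑ e ∈ Finset.Icc 3 X, u ^ e / 3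
                = (1/3) * ∑ e ∈ Finset.Icc 3 X, u ^ e := by
              rw [Finset.mul_sum]
              apply Finset.sum_congr rfl
              intro e _
              ring
            rw [hsum3]
            have := geom_tail_le hu0 hu1 X
            have h1u : (0:ℝ) < 1 - u := by linarith
            have hg : u ^ 3 * (1 / (1 - u)) ≤ u^2 := by
              rw [mul_one_div, div_le_iff₀ h1u]
              nlinarith
            nlinarith [this]
          linarith
        · have hempty : Finset.Icc 2 X = ∅ := by
            apply Finset.Icc_eq_empty
            omega
          rw [hempty]
          rw [Finset.sum_empty]
          positivity
      linarith
    linarith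
  -- ### conclusion
  refine ⟨6, by norm_num, ?_⟩
  intro x hx
  have hx0 : (0:ℝ) < x := by linarith
  set X := Nat.floor x with hX_def
  have hX6 : 6 ≤ X := Nat.le_floor (by exact_mod_cast hx)
  have hX1 : 1 ≤ X := by omega
  have hXx : (X:ℝ) ≤ x := Nat.floor_le hx0.le
  have hxX1 : x - (X:ℝ) ≤ 1 := by
    have := Nat.lt_floor_add_one x
    rw [← hX_def] at this
    linarith
  set c : ℝ := 1 - 1/(q:ℝ) - 1/s - T with hc_def
  set Bfin := (Finset.Ioc 0 X).filter (fun n => μ n < c) with hB_def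
  have hseteq : {n : ℕ | 1 ≤ n ∧ (n:ℝ) ≤ x ∧ μ n < c} = ↑Bfin := by
    ext n
    simp only [hB_def, Finset.coe_filter, Set.mem_setOf_eq, Finset.mem_Ioc]
    constructor
    · rintro ⟨h1, h2, h3⟩
      exact ⟨⟨by omega, Nat.le_floor h2⟩, h3⟩
    · rintro ⟨⟨h1, h2⟩, h3⟩
      refine ⟨by omega, ?_, h3⟩
      calc (n:ℝ) ≤ (X:ℝ) := by exact_mod_cast h2
        _ ≤ x := hXx
  rw [hseteq, Set.ncard_coe_finset]
  have hBsub : Bfin ⊆ Finset.Ioc 0 X := Finset.filter_subset _ _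
  have hBcard : Bfin.card ≤ X := by
    have := Finset.card_le_card hBsub
    simpa [Nat.card_Ioc] using this
  have hcardsplit : Bfin.card + ((Finset.Ioc 0 X).filter (fun n => ¬ μ n < c)).card = X := by
    rw [hB_def, Finset.card_filter_add_card_filter_not]
    simp [Nat.card_Ioc]
  -- upper bound for the sum
  have hup : ∑ n ∈ Finset.Ioc 0 X, μ n
      ≤ (Bfin.card:ℝ) * c + ((X:ℝ) - Bfin.card) * (1 - u^2) := by
    rw [← Finset.sum_filter_add_sum_filter_not (Finset.Ioc 0 X) (fun n => μ n < c)]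
    have h1 : ∑ n ∈ Bfin, μ n ≤ (Bfin.card:ℝ) * c := by
      have := Finset.sum_le_card_nsmul Bfin μ c
        (fun n hn => le_of_lt (Finset.mem_filter.mp hn).2)
      simpa [nsmul_eq_mul] using this
    have h2 : ∑ n ∈ (Finset.Ioc 0 X).filter (fun n => ¬ μ n < c), μ n
        ≤ ((((Finset.Ioc 0 X).filter (fun n => ¬ μ n < c)).card : ℕ):ℝ) * (1 - u^2) := by
      have := Finset.sum_le_card_nsmul ((Finset.Ioc 0 X).filter (fun n => ¬ μ n < c)) μ
        (1 - u^2) (fun n hn => by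
          have hn' := Finset.mem_filter.mp hn
          have := Finset.mem_Ioc.mp hn'.1
          exact hμ_up n (by omega))
      simpa [nsmul_eq_mul] using this
    have h3 : ((((Finset.Ioc 0 X).filter (fun n => ¬ μ n < c)).card : ℕ):ℝ)
        = (X:ℝ) - Bfin.card := by
      have hc' : ((Bfin.card : ℕ):ℝ) + ((((Finset.Ioc 0 X).filter
          (fun n => ¬ μ n < c)).card : ℕ):ℝ) = ((X:ℕ):ℝ) := by
        exact_mod_cast hcardsplit
      linarith
    rw [h3] at h2
    exact add_le_add h1 h2
  -- the double-sum swap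
  have hswap : ∑ n ∈ Finset.Ioc 0 X, ∑ d ∈ n.divisors, w d
      = ∑ d ∈ Finset.Ioc 0 X, (((X / d : ℕ)):ℝ) * w d := by
    have hdiv_eq : ∀ n ∈ Finset.Ioc 0 X, ∑ d ∈ n.divisors, w d
        = ∑ d ∈ Finset.Ioc 0 X, if d ∣ n then w d else 0 := by
      intro n hn
      rw [Finset.mem_Ioc] at hn
      have hdiv : n.divisors = (Finset.Ioc 0 X).filter (fun d => d ∣ n) := by
        ext d
        simp only [Nat.mem_divisors, Finset.mem_filter, Finset.mem_Ioc]
        constructor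
        · rintro ⟨hdvd, _⟩
          exact ⟨⟨Nat.pos_of_dvd_of_pos hdvd (by omega),
            le_trans (Nat.le_of_dvd (by omega) hdvd) hn.2⟩, hdvd⟩
        · rintro ⟨_, hdvd⟩
          exact ⟨hdvd, by omega⟩
      rw [hdiv, Finset.sum_filter]
    calc ∑ n ∈ Finset.Ioc 0 X, ∑ d ∈ n.divisors, w d
        = ∑ n ∈ Finset.Ioc 0 X, ∑ d ∈ Finset.Ioc 0 X, if d ∣ n then w d else 0 :=
          Finset.sum_congr rfl hdiv_eq
      _ = ∑ d ∈ Finset.Ioc 0 X, ∑ n ∈ Finset.Ioc 0 X, if d ∣ n then w d else 0 :=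
          Finset.sum_comm
      _ = ∑ d ∈ Finset.Ioc 0 X, (((X / d : ℕ)):ℝ) * w d := by
          apply Finset.sum_congr rfl
          intro d _
          rw [← Finset.sum_filter, Finset.sum_const, Nat.Ioc_filter_dvd_card_eq_div,
            nsmul_eq_mul]
  -- lower bound for the sum
  have hlow : (X:ℝ) - x * (u^2 + (u - u^2/6)) ≤ ∑ n ∈ Finset.Ioc 0 X, μ n := by
    have h1 : ∑ n ∈ Finset.Ioc 0 X, (1 - ∑ d ∈ n.divisors, w d)
        ≤ ∑ n ∈ Finset.Ioc 0 X, μ n :=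
      Finset.sum_le_sum (fun n _ => hμ_low n)
    have h2 : ∑ n ∈ Finset.Ioc 0 X, (1 - ∑ d ∈ n.divisors, w d)
        = (X:ℝ) - ∑ n ∈ Finset.Ioc 0 X, ∑ d ∈ n.divisors, w d := by
      rw [Finset.sum_sub_distrib, Finset.sum_const, Nat.card_Ioc, nsmul_eq_mul]
      simp
    have h3 : ∑ d ∈ Finset.Ioc 0 X, (((X / d : ℕ)):ℝ) * w d
        ≤ x * ∑ d ∈ Finset.Ioc 0 X, w d / d := by
      rw [Finset.mul_sum]
      apply Finset.sum_le_sum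
      intro d hd
      rw [Finset.mem_Ioc] at hd
      have hd0 : (0:ℝ) < (d:ℝ) := by exact_mod_cast hd.1
      have hc1 : ((X / d : ℕ):ℝ) ≤ (X:ℝ)/(d:ℝ) := Nat.cast_div_le
      have hc2 : (X:ℝ)/(d:ℝ) ≤ x/(d:ℝ) := by
        gcongr
      calc ((X / d : ℕ):ℝ) * w d ≤ (x/(d:ℝ)) * w d :=
            mul_le_mul_of_nonneg_right (hc1.trans hc2) (hw0 d)
        _ = x * (w d / d) := by ring
    have h4 := hkey X hX1
    have h5 : ∑ n ∈ Finset.Ioc 0 X, ∑ d ∈ n.divisors, w d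
        ≤ x * (u^2 + (u - u^2/6)) := by
      rw [hswap]
      refine h3.trans ?_
      exact mul_le_mul_of_nonneg_left h4 hx0.le
    linarith
  -- final algebra
  have hc_eq : c = 1 - u^2 - u - T := by
    rw [hc_def, huq', hu_def]
    rw [one_div]
  have hchain : (Bfin.card:ℝ) * (u + T) ≤ x * u := by
    have hXB : ((Bfin.card:ℕ):ℝ) ≤ (X:ℝ) := by exact_mod_cast hBcard
    have hcomb : (X:ℝ) - x * (u^2 + (u - u^2/6))
        ≤ (Bfin.card:ℝ) * c + ((X:ℝ) - Bfin.card) * (1 - u^2) := le_trans hlow hup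
    rw [hc_eq] at hcomb
    have hkey2 : (x - (X:ℝ) - x/6) * u^2 ≤ 0 :=
      mul_nonpos_of_nonpos_of_nonneg (by linarith) (sq_nonneg u)
    nlinarith [hcomb, hkey2]
  have hpos : (0:ℝ) < 1 + T * s := by positivity
  rw [le_div_iff₀ hpos]
  have hmul := mul_le_mul_of_nonneg_right hchain hs0.le
  have hxu : x * u * s = x := by rw [mul_assoc, hus, mul_one]
  have hBu : (Bfin.card:ℝ) * (u + T) * s = (Bfin.card:ℝ) * (1 + T * s) := by
    have : (u + T) * s = 1 + T * s := by
      rw [add_mul, hus]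
    rw [mul_assoc, this]
  rw [hxu, hBu] at hmul
  exact hmul
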